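/- Let n ≥ 3, let M ∈ ℂ, and let P : ZMod n → ℂ be an n-gon such that each triple (M, P i, P (i+1)) is non-collinear; let P' = 𝒞_M(P). Then for every index i such that P' (i−1) ≠ P' i, the reflection of M across the line through P' (i−1) and P' i equals P i. (In other words, the inverse of the circumcenter map is the M-reflection construction.) -/

import Mathlib

open scoped Classical

/-- Circumcenter of three points of `ℂ` (junk value `0` if the points are collinear).
When the points are affinely independent this is the unique point equidistant from all three. -/
noncomputable def ccenter (A B C : ℂ) : ℂ :=
  if h : AffineIndependent ℝ ![A, B, C] then
    (⟨![A, B, C], h⟩ : Affine.Simplex ℝ ℂ 2).circumcenter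
  else 0

/-- The circumcenter map `𝒞_M`: the `i`-th vertex of the image polygon is the
circumcenter of `M`, `P i`, `P (i + 1)`. -/
noncomputable def cmap {n : ℕ} (M : ℂ) (P : ZMod n → ℂ) : ZMod n → ℂ :=
  fun i => ccenter M (P i) (P (i + 1))

lemma cmap_dist {n : ℕ} (M : ℂ) (P : ZMod n → ℂ) (j : ZMod n)
    (h : AffineIndependent ℝ ![M, P j, P (j + 1)]) :
    dist (cmap M P j) M = dist (cmap M P j) (P j) ∧
      dist (cmap M P j) M = dist (cmap M P j) (P (j + 1)) := by
  set S : Affine.Simplex ℝ ℂ 2 := ⟨![M, P j, P (j + 1)], h⟩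
  have hc : cmap M P j = S.circumcenter := by simp [cmap, ccenter, h, S]
  have h0 := S.dist_circumcenter_eq_circumradius 0
  have h1 := S.dist_circumcenter_eq_circumradius 1
  have h2 := S.dist_circumcenter_eq_circumradius 2
  constructor <;> rw [hc, dist_comm, dist_comm S.circumcenter]
  · exact h0.trans h1.symm
  · exact h0.trans h2.symm

/-- The inverse of the circumcenter map is the `M`-reflection construction:
reflecting `M` across the line through `𝒞_M(P) (i-1)` and `𝒞_M(P) i` gives back `P i`. -/
theorem circumcenter_map_inverse_is_reflection
    (n : ℕ) (hn : 3 ≤ n) (M : ℂ) (P : ZMod n → ℂ)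
    (hnc : ∀ i : ZMod n, AffineIndependent ℝ ![M, P i, P (i + 1)]) :
    ∀ i : ZMod n, cmap M P (i - 1) ≠ cmap M P i →
      EuclideanGeometry.reflection (affineSpan ℝ {cmap M P (i - 1), cmap M P i}) M = P i := by
  intro i hne
  set O₁ := cmap M P (i - 1) with hO₁def
  set O₂ := cmap M P i with hO₂def
  have hi : (i - 1) + 1 = i := by ring
  have hMP : M ≠ P i := by
    have := (hnc i).injective.ne (show (0 : Fin 3) ≠ 1 by decide)
    simpa using this
  -- the two centers lie on the perpendicular bisector of [M, P i]
  have h1 := cmap_dist M P (i - 1) (hnc (i - 1))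
  have h2 := cmap_dist M P i (hnc i)
  rw [hi] at h1
  have hO₁mem : O₁ ∈ AffineSubspace.perpBisector M (P i) := by
    rw [AffineSubspace.mem_perpBisector_iff_dist_eq]
    exact h1.2
  have hO₂mem : O₂ ∈ AffineSubspace.perpBisector M (P i) := by
    rw [AffineSubspace.mem_perpBisector_iff_dist_eq]
    exact h2.1
  have hle : affineSpan ℝ {O₁, O₂} ≤ AffineSubspace.perpBisector M (P i) := by
    rw [affineSpan_le]
    rintro x (rfl | rfl)
    exacts [hO₁mem, hO₂mem]
  have hdir : (affineSpan ℝ ({O₁, O₂} : Set ℂ)).direction =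
      (AffineSubspace.perpBisector M (P i)).direction := by
    apply Submodule.eq_of_le_of_finrank_eq (AffineSubspace.direction_le hle)
    haveI : Fact (Module.finrank ℝ ℂ = 1 + 1) := ⟨by simp [Complex.finrank_real_complex]⟩
    have hv1 : P i -ᵥ M ≠ 0 := by
      simpa [vsub_eq_sub, sub_eq_zero] using fun h => hMP h.symm
    have hv2 : O₁ -ᵥ O₂ ≠ 0 := by
      simpa [vsub_eq_sub, sub_eq_zero] using hne
    rw [AffineSubspace.direction_perpBisector, direction_affineSpan, vectorSpan_pair,
      Submodule.finrank_orthogonal_span_singleton (n := 1) hv1, finrank_span_singleton hv2]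
  have hseq : affineSpan ℝ ({O₁, O₂} : Set ℂ) = AffineSubspace.perpBisector M (P i) :=
    (AffineSubspace.eq_iff_direction_eq_of_mem
      (mem_affineSpan ℝ (by simp)) hO₁mem).2 hdir
  haveI : Nonempty (AffineSubspace.perpBisector M (P i)) :=
    ⟨⟨_, AffineSubspace.midpoint_mem_perpBisector M (P i)⟩⟩
  rw [EuclideanGeometry.eq_reflection_of_eq_subspace hseq M]
  have hproj : EuclideanGeometry.orthogonalProjection
      (AffineSubspace.perpBisector M (P i)) M =
      ⟨midpoint ℝ M (P i), AffineSubspace.midpoint_mem_perpBisector M (P i)⟩ := by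
    have hv : M -ᵥ midpoint ℝ M (P i) ∈
        (AffineSubspace.perpBisector M (P i)).directionᗮ := by
      rw [AffineSubspace.direction_perpBisector, Submodule.orthogonal_orthogonal,
        Submodule.mem_span_singleton]
      refine ⟨-(1/2 : ℝ), ?_⟩
      simp only [vsub_eq_sub, midpoint_eq_smul_add, Complex.real_smul, invOf_eq_inv]
      push_cast
      ring
    have := EuclideanGeometry.orthogonalProjection_vadd_eq_self
      (AffineSubspace.midpoint_mem_perpBisector M (P i)) hv
    rwa [vsub_vadd] at this
  rw [EuclideanGeometry.reflection_apply', hproj]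
  simp only [vsub_eq_sub, vadd_eq_add, midpoint_eq_smul_add, Complex.real_smul, invOf_eq_inv]
  push_cast
  ring
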